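/- For all integers p, q ≥ 0 and every z ∈ ℂ, (1/π) ∫_ℂ exp(−|z−w|²) · H_{p,q}(w, conj(w)) dA(w) = z^p · conj(z)^q, where H_{p,q} is the complex Hermite polynomial. -/

import Mathlib

open Complex ComplexConjugate MeasureTheory Real Set

lemma integrable_gaussian_half : Integrable (fun v : ℂ => Real.exp (-(1/2) * ‖v‖^2)) := by
  have h2 : Integrable (fun v : ℂ =>
      Complex.exp (-(1/2 : ℂ) * ‖v‖^2 + 0 * (inner ℝ (0:ℂ) v : ℝ))) :=
    GaussianFourier.integrable_cexp_neg_mul_sq_norm_add (by norm_num) 0 0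
  refine Integrable.congr h2.norm ?_
  filter_upwards with v
  rw [Complex.norm_exp]
  norm_num [← Complex.ofReal_pow]

lemma continuous_gaussian_pow (a b : ℕ) :
    Continuous (fun u : ℂ => Complex.exp (-((‖u‖ : ℂ) ^ 2)) * u ^ a * (conj u) ^ b) := by
  have h1 : Continuous fun u : ℂ => -((‖u‖ : ℂ)^2) := by continuity
  exact ((Complex.continuous_exp.comp h1).mul (continuous_pow a)).mul
    (Complex.continuous_conj.pow b)

lemma integrable_gaussian_pow (a b : ℕ) :
    Integrable (fun u : ℂ => Complex.exp (-((‖u‖ : ℂ) ^ 2)) * u ^ a * (conj u) ^ b) := by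
  have hbound : ∀ u : ℂ, ‖Complex.exp (-((‖u‖ : ℂ) ^ 2)) * u ^ a * (conj u) ^ b‖
      ≤ ((a+b).factorial * Real.exp (1/2)) * Real.exp (-(1/2) * ‖u‖^2) := by
    intro u
    have h1 : ‖Complex.exp (-((‖u‖ : ℂ) ^ 2)) * u ^ a * (conj u) ^ b‖
        = Real.exp (-‖u‖^2) * ‖u‖^(a+b) := by
      rw [norm_mul, norm_mul, norm_pow, norm_pow, Complex.norm_exp, RCLike.norm_conj]
      rw [show (-((‖u‖:ℂ))^2).re = -‖u‖^2 by norm_num [← Complex.ofReal_pow]]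
      rw [pow_add]; ring
    rw [h1]
    set t := ‖u‖ with ht
    have ht0 : 0 ≤ t := norm_nonneg u
    have hfact : t ^ (a+b) ≤ (a+b).factorial * Real.exp t := by
      have h2 : t^(a+b) / (a+b).factorial ≤ Real.exp t := by
        refine le_trans ?_ (Real.sum_le_exp_of_nonneg ht0 (a+b+1))
        exact Finset.single_le_sum (f := fun i => t^i / i.factorial)
          (fun i _ => by positivity) (Finset.self_mem_range_succ (a+b))
      have h3 : (0:ℝ) < (a+b).factorial := by positivity
      calc t^(a+b) = (a+b).factorial * (t^(a+b) / (a+b).factorial) := by field_simp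
        _ ≤ (a+b).factorial * Real.exp t := by nlinarith
    have hexp : Real.exp t ≤ Real.exp (1/2 + 1/2 * t^2) := by
      apply Real.exp_le_exp.2; nlinarith [sq_nonneg (t - 1)]
    calc Real.exp (-t^2) * t^(a+b)
        ≤ Real.exp (-t^2) * ((a+b).factorial * Real.exp (1/2 + 1/2 * t^2)) := by
          apply mul_le_mul_of_nonneg_left _ (Real.exp_pos _).le
          exact le_trans hfact (mul_le_mul_of_nonneg_left hexp (by positivity))
      _ = (a+b).factorial * (Real.exp (-t^2) * Real.exp (1/2 + 1/2 * t^2)) := by ring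
      _ = ((a+b).factorial * Real.exp (1/2)) * Real.exp (-(1/2) * t^2) := by
          rw [← Real.exp_add, show -t^2 + (1/2 + 1/2*t^2) = 1/2 + -(1/2)*t^2 by ring,
            Real.exp_add]; ring
  exact (Integrable.const_mul integrable_gaussian_half _).mono'
    (continuous_gaussian_pow a b).aestronglyMeasurable (Filter.Eventually.of_forall hbound)

lemma gaussian_moment (a b : ℕ) :
    (∫ u : ℂ, Complex.exp (-((‖u‖ : ℂ) ^ 2)) * u ^ a * (conj u) ^ b)
      = if a = b then (Real.pi : ℂ) * a.factorial else 0 := by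
  rw [← Complex.integral_comp_polarCoord_symm, polarCoord_target]
  have hcong : ∀ x ∈ Ioi (0:ℝ) ×ˢ Ioo (-π) π,
      x.1 • (Complex.exp (-((‖Complex.polarCoord.symm x‖ : ℂ) ^ 2)) *
        (Complex.polarCoord.symm x) ^ a * (conj (Complex.polarCoord.symm x)) ^ b)
      = (fun r : ℝ => ((r ^ (a+b+1) * Real.exp (-r^2) : ℝ) : ℂ)) x.1 *
        (fun θ : ℝ => Complex.exp (((a:ℂ) - b) * θ * Complex.I)) x.2 := by
    rintro ⟨r, θ⟩ ⟨hr, hθ⟩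
    simp only
    have hr0 : (0:ℝ) < r := hr
    have hsymm : Complex.polarCoord.symm (r, θ) = (r:ℂ) * Complex.exp ((θ:ℂ) * Complex.I) := by
      rw [Complex.polarCoord_symm_apply, Complex.exp_mul_I]
      push_cast
      ring
    rw [hsymm]
    have hnorm : ‖(r:ℂ) * Complex.exp ((θ:ℂ) * Complex.I)‖ = r := by
      rw [norm_mul, Complex.norm_exp]
      simp [abs_of_pos hr0]
    rw [hnorm]
    have hconj : conj ((r:ℂ) * Complex.exp ((θ:ℂ) * Complex.I))
        = (r:ℂ) * Complex.exp (-((θ:ℂ) * Complex.I)) := by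
      rw [map_mul, Complex.conj_ofReal, ← Complex.exp_conj]
      congr 1
      simp [Complex.conj_I]
    rw [hconj, mul_pow, mul_pow, ← Complex.exp_nat_mul, ← Complex.exp_nat_mul,
      Complex.real_smul,
      show -((r:ℂ))^2 = ((-(r^2) : ℝ) : ℂ) by push_cast; ring, ← Complex.ofReal_exp,
      show ((a:ℂ)-b)*θ*Complex.I
        = (a:ℕ)*((θ:ℂ)*Complex.I) + (b:ℕ)*(-((θ:ℂ)*Complex.I)) by push_cast; ring,
      Complex.exp_add]
    push_cast
    ring
  rw [setIntegral_congr_fun (measurableSet_Ioi.prod measurableSet_Ioo) hcong]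
  beta_reduce
  rw [Measure.volume_eq_prod, ← Measure.prod_restrict,
    integral_prod_mul (μ := volume.restrict (Ioi (0:ℝ))) (ν := volume.restrict (Ioo (-π) π))
      (f := fun r : ℝ => ((r ^ (a+b+1) * Real.exp (-r^2) : ℝ) : ℂ))
      (g := fun θ : ℝ => Complex.exp (((a:ℂ) - b) * θ * Complex.I))]
  have hradR : (∫ r in Ioi (0:ℝ), r ^ (a+b+1) * Real.exp (-r^2))
      = (1/2) * Real.Gamma ((a+b+2)/2) := by
    rw [show (∫ r in Ioi (0:ℝ), r ^ (a+b+1) * Real.exp (-r^2))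
        = ∫ r in Ioi (0:ℝ), r ^ ((a+b+1 : ℕ) : ℝ) * Real.exp (-r ^ (2:ℝ)) from
      setIntegral_congr_fun measurableSet_Ioi (fun r hr => by
        rw [Real.rpow_natCast, show ((2:ℝ)) = ((2:ℕ):ℝ) by norm_num, Real.rpow_natCast])]
    rw [_root_.integral_rpow_mul_exp_neg_rpow (by norm_num)
      (lt_of_lt_of_le neg_one_lt_zero (by positivity))]
    congr 1
    push_cast
    ring
  have hrad : (∫ r in Ioi (0:ℝ), ((r ^ (a+b+1) * Real.exp (-r^2) : ℝ) : ℂ))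
      = (((1/2) * Real.Gamma ((a+b+2)/2) : ℝ) : ℂ) := by
    rw [← hradR]
    exact integral_ofReal
  rw [hrad]
  by_cases hab : a = b
  · subst hab
    have hang : (∫ θ in Ioo (-π) π, Complex.exp (((a:ℂ) - a) * θ * Complex.I))
        = ((2 * π : ℝ) : ℂ) := by
      simp only [sub_self, zero_mul, Complex.exp_zero]
      rw [setIntegral_const, Real.volume_real_Ioo_of_le (by linarith [Real.pi_pos]), show π - -π = 2 * π by ring,
        Complex.real_smul, mul_one]
    rw [hang, if_pos rfl]
    have : Real.Gamma ((a+a+2)/2) = a.factorial := by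
      rw [show ((a:ℝ)+a+2)/2 = (a:ℝ) + 1 by ring, Real.Gamma_nat_eq_factorial]
    rw [this]
    push_cast
    ring
  · have hc : ((a:ℂ) - b) * Complex.I ≠ 0 := by
      apply mul_ne_zero _ Complex.I_ne_zero
      rw [sub_ne_zero]
      exact_mod_cast fun h => hab (Nat.cast_injective h)
    have hang : (∫ θ in Ioo (-π) π, Complex.exp (((a:ℂ) - b) * θ * Complex.I)) = 0 := by
      have h1 : ∀ θ:ℝ, ((a:ℂ)-b) * θ * Complex.I = (((a:ℂ)-b) * Complex.I) * θ := fun θ => by ring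
      simp_rw [h1]
      rw [← integral_Ioc_eq_integral_Ioo,
        ← intervalIntegral.integral_of_le (by linarith [Real.pi_pos] : -π ≤ π),
        integral_exp_mul_complex hc]
      rw [div_eq_zero_iff]
      left
      rw [sub_eq_zero,
        show (((a:ℂ)-b) * Complex.I) * (π:ℝ)
          = (((a:ℂ)-b)*Complex.I) * ((-π : ℝ):ℂ) + ((((a:ℤ) - (b:ℤ) : ℤ)) : ℂ) * (2*(π:ℝ)*Complex.I) by
            push_cast; ring,
        Complex.exp_add, Complex.exp_int_mul_two_pi_mul_I, mul_one]
    rw [hang, if_neg hab, mul_zero]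


lemma expand_fun (m n : ℕ) (z : ℂ) : ∀ w : ℂ,
    Complex.exp (-((‖w‖ : ℂ) ^ 2)) * ((w+z)^m * (conj (w+z))^n)
    = ∑ i ∈ Finset.range (m+1), ∑ j ∈ Finset.range (n+1),
        ((m.choose i : ℂ) * z^(m-i) * (n.choose j : ℂ) * (conj z)^(n-j)) *
          (Complex.exp (-((‖w‖ : ℂ) ^ 2)) * w^i * (conj w)^j) := by
  intro w
  rw [add_pow, map_add, add_pow, Finset.sum_mul_sum, Finset.mul_sum]
  refine Finset.sum_congr rfl fun i _ => ?_
  rw [Finset.mul_sum]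
  refine Finset.sum_congr rfl fun j _ => ?_
  ring

lemma lemB_int (m n : ℕ) (z : ℂ) :
    Integrable (fun w : ℂ =>
      Complex.exp (-((‖w‖ : ℂ) ^ 2)) * ((w+z)^m * (conj (w+z))^n)) := by
  rw [funext (expand_fun m n z)]
  refine integrable_finset_sum _ (fun i _ => integrable_finset_sum _ (fun j _ => ?_))
  exact (integrable_gaussian_pow i j).const_mul _

lemma lemB (m n : ℕ) (z : ℂ) :
    (∫ w : ℂ, Complex.exp (-((‖w‖ : ℂ) ^ 2)) * ((w+z)^m * (conj (w+z))^n))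
    = (Real.pi : ℂ) * ∑ i ∈ Finset.range (m+1),
        (m.choose i : ℂ) * (n.choose i : ℂ) * (i.factorial : ℂ) * z^(m-i) * (conj z)^(n-i) := by
  calc (∫ w : ℂ, Complex.exp (-((‖w‖ : ℂ) ^ 2)) * ((w+z)^m * (conj (w+z))^n))
      = ∫ w : ℂ, ∑ i ∈ Finset.range (m+1), ∑ j ∈ Finset.range (n+1),
          ((m.choose i : ℂ) * z^(m-i) * (n.choose j : ℂ) * (conj z)^(n-j)) *
            (Complex.exp (-((‖w‖ : ℂ) ^ 2)) * w^i * (conj w)^j) := by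
        rw [funext (expand_fun m n z)]
    _ = ∑ i ∈ Finset.range (m+1), ∑ j ∈ Finset.range (n+1),
          ((m.choose i : ℂ) * z^(m-i) * (n.choose j : ℂ) * (conj z)^(n-j)) *
            ∫ w : ℂ, Complex.exp (-((‖w‖ : ℂ) ^ 2)) * w^i * (conj w)^j := by
        rw [integral_finset_sum _ (fun i _ => integrable_finset_sum _
          (fun j _ => (integrable_gaussian_pow i j).const_mul _))]
        refine Finset.sum_congr rfl fun i _ => ?_
        rw [integral_finset_sum _ (fun j _ => (integrable_gaussian_pow i j).const_mul _)]
        exact Finset.sum_congr rfl fun j _ => integral_const_mul _ _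
    _ = ∑ i ∈ Finset.range (m+1), ∑ j ∈ Finset.range (n+1),
          ((m.choose i : ℂ) * z^(m-i) * (n.choose j : ℂ) * (conj z)^(n-j)) *
            (if i = j then (Real.pi : ℂ) * i.factorial else 0) := by
        simp_rw [gaussian_moment]
    _ = ∑ i ∈ Finset.range (m+1),
          (if i ∈ Finset.range (n+1) then
            ((m.choose i : ℂ) * z^(m-i) * (n.choose i : ℂ) * (conj z)^(n-i)) *
              ((Real.pi : ℂ) * i.factorial) else 0) := by
        refine Finset.sum_congr rfl fun i _ => ?_
        rw [← Finset.sum_ite_eq (Finset.range (n+1)) i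
          (fun j => ((m.choose i : ℂ) * z^(m-i) * (n.choose j : ℂ) * (conj z)^(n-j)) *
            ((Real.pi : ℂ) * i.factorial))]
        refine Finset.sum_congr rfl fun j _ => ?_
        by_cases h : i = j
        · subst h; simp
        · simp [h]
    _ = (Real.pi : ℂ) * ∑ i ∈ Finset.range (m+1),
          (m.choose i : ℂ) * (n.choose i : ℂ) * (i.factorial : ℂ) * z^(m-i) * (conj z)^(n-i) := by
        rw [Finset.mul_sum]
        refine Finset.sum_congr rfl fun i _ => ?_
        by_cases h : i ∈ Finset.range (n+1)
        · rw [if_pos h]; ring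
        · rw [if_neg h]
          have : n.choose i = 0 := Nat.choose_eq_zero_of_lt (by
            simpa using Finset.mem_range.not.mp h |> fun hh => by omega)
          rw [this]
          push_cast
          ring

lemma choose_helper (p k i : ℕ) :
    p.choose k * (p-k).choose i = p.choose (k+i) * (k+i).choose k := by
  by_cases h : k + i ≤ p
  · have h2 := Nat.choose_mul (n := p) (k := k+i) (s := k) (Nat.le_add_right k i)
    rw [Nat.add_sub_cancel_left] at h2
    omega
  · rw [Nat.choose_eq_zero_of_lt (by omega : p < k+i), zero_mul]
    by_cases hk : k ≤ p
    · rw [Nat.choose_eq_zero_of_lt (by omega : p - k < i), mul_zero]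
    · rw [Nat.choose_eq_zero_of_lt (by omega : p < k), zero_mul]

lemma coeff_helper (p q k i : ℕ) :
    k.factorial * i.factorial * (p.choose k * (p-k).choose i) * (q.choose k * (q-k).choose i)
    = (k+i).choose k * ((k+i).factorial * (p.choose (k+i) * q.choose (k+i))) := by
  rw [choose_helper p k i, choose_helper q k i,
    ← Nat.choose_mul_factorial_mul_factorial (Nat.le_add_right k i), Nat.add_sub_cancel_left]
  ring

lemma comb (p q : ℕ) (z : ℂ) :
    ∑ k ∈ Finset.range (min p q + 1), ((-1:ℂ)^k * (k.factorial : ℂ) * (p.choose k : ℂ) *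
        (q.choose k : ℂ)) *
      ∑ i ∈ Finset.range ((p-k)+1), ((p-k).choose i : ℂ) * ((q-k).choose i : ℂ) *
        (i.factorial : ℂ) * z^(p-k-i) * (conj z)^(q-k-i)
    = z ^ p * (conj z) ^ q := by
  set G : ℕ → ℂ := fun m => (m.factorial : ℂ) * (p.choose m : ℂ) * (q.choose m : ℂ) *
    z^(p-m) * (conj z)^(q-m) with hG
  have hin : ∀ k : ℕ, (∑ i ∈ Finset.range ((p-k)+1), ((p-k).choose i : ℂ) *
        ((q-k).choose i : ℂ) * (i.factorial : ℂ) * z^(p-k-i) * (conj z)^(q-k-i))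
      = ∑ i ∈ Finset.range (p+1), ((p-k).choose i : ℂ) * ((q-k).choose i : ℂ) *
        (i.factorial : ℂ) * z^(p-k-i) * (conj z)^(q-k-i) := by
    intro k
    refine Finset.sum_subset (fun i hi => ?_) (fun i hi hni => ?_)
    · rw [Finset.mem_range] at hi ⊢; omega
    · rw [Finset.mem_range] at hi hni
      have h0 : (p-k).choose i = 0 := Nat.choose_eq_zero_of_lt (by omega)
      rw [h0]; push_cast; ring
  have hstep1 : ∑ k ∈ Finset.range (min p q + 1), ((-1:ℂ)^k * (k.factorial : ℂ) *
        (p.choose k : ℂ) * (q.choose k : ℂ)) *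
      ∑ i ∈ Finset.range ((p-k)+1), ((p-k).choose i : ℂ) * ((q-k).choose i : ℂ) *
        (i.factorial : ℂ) * z^(p-k-i) * (conj z)^(q-k-i)
      = ∑ k ∈ Finset.range (p+1), ∑ i ∈ Finset.range (p+1),
          ((-1:ℂ)^k * (k.factorial : ℂ) * (p.choose k : ℂ) * (q.choose k : ℂ)) *
          (((p-k).choose i : ℂ) * ((q-k).choose i : ℂ) *
            (i.factorial : ℂ) * z^(p-k-i) * (conj z)^(q-k-i)) := by
    calc ∑ k ∈ Finset.range (min p q + 1), ((-1:ℂ)^k * (k.factorial : ℂ) *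
          (p.choose k : ℂ) * (q.choose k : ℂ)) *
        ∑ i ∈ Finset.range ((p-k)+1), ((p-k).choose i : ℂ) * ((q-k).choose i : ℂ) *
          (i.factorial : ℂ) * z^(p-k-i) * (conj z)^(q-k-i)
        = ∑ k ∈ Finset.range (min p q + 1), ((-1:ℂ)^k * (k.factorial : ℂ) *
            (p.choose k : ℂ) * (q.choose k : ℂ)) *
          ∑ i ∈ Finset.range (p+1), ((p-k).choose i : ℂ) * ((q-k).choose i : ℂ) *
            (i.factorial : ℂ) * z^(p-k-i) * (conj z)^(q-k-i) := by
          exact Finset.sum_congr rfl fun k _ => by rw [hin k]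
      _ = ∑ k ∈ Finset.range (p+1), ((-1:ℂ)^k * (k.factorial : ℂ) *
            (p.choose k : ℂ) * (q.choose k : ℂ)) *
          ∑ i ∈ Finset.range (p+1), ((p-k).choose i : ℂ) * ((q-k).choose i : ℂ) *
            (i.factorial : ℂ) * z^(p-k-i) * (conj z)^(q-k-i) := by
          refine Finset.sum_subset (fun k hk => ?_) (fun k hk hnk => ?_)
          · rw [Finset.mem_range] at hk ⊢; omega
          · rw [Finset.mem_range] at hk hnk
            have h0 : q.choose k = 0 := Nat.choose_eq_zero_of_lt (by omega)
            rw [h0]; push_cast; ring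
      _ = ∑ k ∈ Finset.range (p+1), ∑ i ∈ Finset.range (p+1),
          ((-1:ℂ)^k * (k.factorial : ℂ) * (p.choose k : ℂ) * (q.choose k : ℂ)) *
          (((p-k).choose i : ℂ) * ((q-k).choose i : ℂ) *
            (i.factorial : ℂ) * z^(p-k-i) * (conj z)^(q-k-i)) := by
          exact Finset.sum_congr rfl fun k _ => Finset.mul_sum _ _ _
  rw [hstep1]
  have hterm : ∀ k i : ℕ,
      ((-1:ℂ)^k * (k.factorial : ℂ) * (p.choose k : ℂ) * (q.choose k : ℂ)) *
        (((p-k).choose i : ℂ) * ((q-k).choose i : ℂ) *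
          (i.factorial : ℂ) * z^(p-k-i) * (conj z)^(q-k-i))
      = (-1:ℂ)^k * (((k+i).choose k : ℕ) : ℂ) * G (k+i) := by
    intro k i
    have h := coeff_helper p q k i
    have h2 : ((k.factorial * i.factorial * (p.choose k * (p-k).choose i) *
        (q.choose k * (q-k).choose i) : ℕ) : ℂ)
        = (((k+i).choose k * ((k+i).factorial * (p.choose (k+i) * q.choose (k+i))) : ℕ) : ℂ) := by
      exact_mod_cast congrArg (Nat.cast : ℕ → ℂ) h
    push_cast at h2
    rw [hG]
    simp only
    rw [Nat.sub_sub, Nat.sub_sub]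
    linear_combination ((-1:ℂ)^k * z^(p-(k+i)) * (conj z)^(q-(k+i))) * h2
  simp_rw [hterm]
  rw [← Finset.sum_product']
  rw [← Finset.sum_fiberwise_of_maps_to (g := fun x : ℕ × ℕ => x.1 + x.2)
    (t := Finset.range (2*p+1)) (by
      rintro ⟨k, i⟩ h
      simp only [Finset.mem_product, Finset.mem_range] at h ⊢
      omega)]
  rw [Finset.sum_eq_single 0]
  · have hfib : (Finset.range (p+1) ×ˢ Finset.range (p+1)).filter
        (fun x : ℕ × ℕ => x.1 + x.2 = 0) = {(0,0)} := by
      ext ⟨a, b⟩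
      simp only [Finset.mem_filter, Finset.mem_product, Finset.mem_range, Finset.mem_singleton,
        Prod.mk.injEq]
      omega
    rw [hfib, Finset.sum_singleton]
    rw [hG]
    simp
  · intro m hm hm0
    by_cases hmp : m ≤ p
    · have hfib : (Finset.range (p+1) ×ˢ Finset.range (p+1)).filter
          (fun x : ℕ × ℕ => x.1 + x.2 = m)
          = (Finset.range (m+1)).image (fun k => (k, m-k)) := by
        ext ⟨a, b⟩
        simp only [Finset.mem_filter, Finset.mem_product, Finset.mem_range, Finset.mem_image,
          Prod.mk.injEq]
        constructor
        · rintro ⟨⟨ha, hb⟩, hab⟩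
          exact ⟨a, by omega, rfl, by omega⟩
        · rintro ⟨k, hk, rfl, rfl⟩
          omega
      rw [hfib, Finset.sum_image (by
        intro x hx y hy hxy
        exact (Prod.mk.injEq _ _ _ _).mp hxy |>.1)]
      have hcg : ∀ k ∈ Finset.range (m+1),
          (-1:ℂ)^k * (((k+(m-k)).choose k : ℕ) : ℂ) * G (k+(m-k))
          = ((-1:ℂ)^k * ((m.choose k : ℕ) : ℂ)) * G m := by
        intro k hk
        rw [Finset.mem_range] at hk
        rw [show k + (m-k) = m by omega]
      rw [Finset.sum_congr rfl hcg, ← Finset.sum_mul]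
      have halt : (∑ k ∈ Finset.range (m+1), (-1:ℂ)^k * ((m.choose k : ℕ) : ℂ)) = 0 := by
        have h := Int.alternating_sum_range_choose_of_ne hm0
        have h2 : ((∑ i ∈ Finset.range (m+1), (-1:ℤ)^i * (m.choose i) : ℤ) : ℂ) = 0 := by
          rw [h]; simp
        push_cast at h2
        exact h2
      rw [halt, zero_mul]
    · refine Finset.sum_eq_zero fun x hx => ?_
      simp only [Finset.mem_filter, Finset.mem_product, Finset.mem_range] at hx
      have hc : p.choose (x.1 + x.2) = 0 := Nat.choose_eq_zero_of_lt (by omega)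
      have hc2 : p.choose m = 0 := Nat.choose_eq_zero_of_lt (by omega)
      rw [hG]
      simp [hc, hc2]
  · intro h
    exact absurd (Finset.mem_range.2 (by omega)) h

/-- The complex Hermite (Itô) polynomial
`H_{m,n}(z, conj z) = Σ_{k=0}^{min(m,n)} (−1)^k·k!·C(m,k)·C(n,k)·z^{m−k}·conj z^{n−k}`. -/
noncomputable def complexHermite (m n : ℕ) (z : ℂ) : ℂ :=
  ∑ k ∈ Finset.range (min m n + 1),
    (-1 : ℂ) ^ k * (k.factorial : ℂ) * (m.choose k : ℂ) * (n.choose k : ℂ) *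
      z ^ (m - k) * conj z ^ (n - k)

/-- For all `p, q ≥ 0` and `z ∈ ℂ`,
`(1/π) ∫_ℂ exp(−|z−w|²)·H_{p,q}(w, conj w) dA(w) = z^p · conj z^q`. -/
theorem berezin_complexHermite (p q : ℕ) (z : ℂ) :
    (1 / (Real.pi : ℂ)) *
      ∫ w : ℂ, Complex.exp (-((‖z - w‖ : ℂ) ^ 2)) * complexHermite p q w
    = z ^ p * conj z ^ q := by
  have h1 : (∫ w : ℂ, Complex.exp (-((‖z - w‖:ℂ)^2)) * complexHermite p q w)
      = ∫ w : ℂ, Complex.exp (-((‖w‖:ℂ)^2)) * complexHermite p q (w + z) := by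
    rw [← MeasureTheory.integral_add_right_eq_self
      (fun w : ℂ => Complex.exp (-((‖z - w‖:ℂ)^2)) * complexHermite p q w) z]
    congr 1
    funext w
    rw [show z - (w + z) = -w by ring, norm_neg]
  rw [h1]
  have h2 : (∫ w : ℂ, Complex.exp (-((‖w‖:ℂ)^2)) * complexHermite p q (w + z))
      = ∑ k ∈ Finset.range (min p q + 1),
          ((-1:ℂ)^k * (k.factorial : ℂ) * (p.choose k : ℂ) * (q.choose k : ℂ)) *
          ∫ w : ℂ, Complex.exp (-((‖w‖:ℂ)^2)) * ((w+z)^(p-k) * (conj (w+z))^(q-k)) := by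
    rw [show (fun w : ℂ => Complex.exp (-((‖w‖:ℂ)^2)) * complexHermite p q (w + z))
        = fun w : ℂ => ∑ k ∈ Finset.range (min p q + 1),
            ((-1:ℂ)^k * (k.factorial : ℂ) * (p.choose k : ℂ) * (q.choose k : ℂ)) *
            (Complex.exp (-((‖w‖:ℂ)^2)) * ((w+z)^(p-k) * (conj (w+z))^(q-k))) from
      funext fun w => by
        rw [complexHermite, Finset.mul_sum]
        exact Finset.sum_congr rfl fun k _ => by ring]
    rw [integral_finset_sum _ (fun k _ => (lemB_int (p-k) (q-k) z).const_mul _)]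
    exact Finset.sum_congr rfl fun k _ => integral_const_mul _ _
  rw [h2]
  simp_rw [lemB]
  have hpi : ((Real.pi : ℝ) : ℂ) ≠ 0 := Complex.ofReal_ne_zero.2 Real.pi_ne_zero
  rw [show (∑ k ∈ Finset.range (min p q + 1),
      ((-1:ℂ)^k * (k.factorial : ℂ) * (p.choose k : ℂ) * (q.choose k : ℂ)) *
      ((Real.pi : ℂ) * ∑ i ∈ Finset.range ((p-k)+1),
        ((p-k).choose i : ℂ) * ((q-k).choose i : ℂ) * (i.factorial : ℂ) *
          z^(p-k-i) * (conj z)^(q-k-i)))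
      = (Real.pi : ℂ) * ∑ k ∈ Finset.range (min p q + 1),
      ((-1:ℂ)^k * (k.factorial : ℂ) * (p.choose k : ℂ) * (q.choose k : ℂ)) *
      ∑ i ∈ Finset.range ((p-k)+1),
        ((p-k).choose i : ℂ) * ((q-k).choose i : ℂ) * (i.factorial : ℂ) *
          z^(p-k-i) * (conj z)^(q-k-i) from by
    rw [Finset.mul_sum]
    exact Finset.sum_congr rfl fun k _ => by ring]
  rw [← mul_assoc, one_div, inv_mul_cancel₀ hpi, one_mul]
  exact comb p q z
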